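/- Lipschitz control of iterated stochastic approximation kernels (Proposition 4.2bis). Let P_k, k=0,…,N−1, be the transition kernels of the Markov chain defined by the stochastic approximation scheme, P_k(f)(θ)=E[f(θ−γ_{k+1}H(θ,U))], and P_{k,p}:=P_k∘···∘P_{p−1} for k≤p. Under assumptions (HL) and (HUA), with innovations satisfying E[|U|²]<∞, for every Lipschitz function f and all 0≤k≤p≤N−1, P_{k,p}(f) is Lipschitz with [P_{k,p}(f)]_1 ≤ [f]_1·∏_{i=k}^{p−1}(1−2λ̲γ_{i+1}+C_{H,μ}γ_{i+1}²)^{1/2}, where C_{H,μ}:=2C_H²(1+E[|U|²]). -/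

import Mathlib

open MeasureTheory ProbabilityTheory Filter
open scoped ENNReal NNReal

noncomputable section

namespace FathiFrikha

/-- Euclidean space `ℝ^n`. -/
abbrev Euc (n : ℕ) := EuclideanSpace ℝ (Fin n)

/-- The random variables `U i` are i.i.d. with common law `μ`. -/
def IsIID {Ω : Type*} [MeasurableSpace Ω] {n : ℕ} (P : Measure Ω)
    (U : ℕ → Ω → Euc n) (μ : Measure (Euc n)) : Prop :=
  iIndepFun U P ∧ ∀ i, Measure.map (U i) P = μ

/-- Stochastic approximation scheme started at the point `θ` at step `k`; the last
index counts the number of steps performed after step `k`. -/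
def rmFrom {Ω : Type*} {d q : ℕ} (H : Euc d → Euc q → Euc d) (γ : ℕ → ℝ)
    (U : ℕ → Ω → Euc q) (k : ℕ) (θ : Euc d) : ℕ → Ω → Euc d
  | 0 => fun _ => θ
  | j + 1 => fun ω =>
      rmFrom H γ U k θ j ω - γ (k + j + 1) • H (rmFrom H γ U k θ j ω) (U (k + j + 1) ω)

lemma sqrt_prod (s : Finset ℕ) (f : ℕ → ℝ) (hf : ∀ i ∈ s, 0 ≤ f i) :
    Real.sqrt (∏ i ∈ s, f i) = ∏ i ∈ s, Real.sqrt (f i) := by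
  induction s using Finset.cons_induction with
  | empty => simp
  | cons a s ha ih =>
    rw [Finset.prod_cons, Finset.prod_cons, Real.sqrt_mul (hf a (Finset.mem_cons_self a s)),
      ih fun i hi => hf i (Finset.mem_cons_of_mem hi)]

lemma sq_integral_le {Ω : Type*} [MeasurableSpace Ω] (P : Measure Ω) [IsProbabilityMeasure P]
    {g : Ω → ℝ} (h1 : Integrable g P) (h2 : Integrable (fun ω => g ω ^ 2) P) :
    (∫ ω, g ω ∂P) ^ 2 ≤ ∫ ω, g ω ^ 2 ∂P := by
  set c := ∫ ω, g ω ∂P with hc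
  have h0 : 0 ≤ ∫ ω, (g ω - c) ^ 2 ∂P := integral_nonneg fun ω => sq_nonneg _
  have i1 : Integrable (fun ω => 2 * c * g ω) P := h1.const_mul _
  have i2 : Integrable (fun ω => g ω ^ 2 - 2 * c * g ω) P := h2.sub i1
  have hrw : (fun ω => (g ω - c) ^ 2) = fun ω => g ω ^ 2 - 2 * c * g ω + c ^ 2 := by
    funext ω; ring
  rw [hrw, integral_add i2 (integrable_const _), integral_sub h2 i1, integral_const_mul, integral_const, probReal_univ] at h0
  simp only [ENNReal.toReal_one, smul_eq_mul, one_mul, ← hc] at h0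
  nlinarith [h0]

lemma iIndepFun_ae_eq {Ω ι : Type*} {β : ι → Type*} [MeasurableSpace Ω]
    {m : ∀ i, MeasurableSpace (β i)} {P : Measure Ω} {f g : ∀ i, Ω → β i}
    (hf : iIndepFun (m := m) f P) (h : ∀ i, f i =ᵐ[P] g i) : iIndepFun (m := m) g P := by
  rw [iIndepFun_iff_measure_inter_preimage_eq_mul] at hf ⊢
  intro S sets hsets
  have hI : ∀ i ∈ S, P (g i ⁻¹' sets i) = P (f i ⁻¹' sets i) := by
    intro i _
    refine measure_congr ?_
    filter_upwards [h i] with ω hω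
    show (ω ∈ g i ⁻¹' sets i) = (ω ∈ f i ⁻¹' sets i)
    simp only [Set.mem_preimage, hω]
  rw [Finset.prod_congr rfl hI, ← hf S hsets]
  refine measure_congr ?_
  have hall : ∀ᵐ ω ∂P, ∀ i ∈ S, f i ω = g i ω := by
    rw [Filter.eventually_all_finset]
    exact fun i _ => h i
  filter_upwards [hall] with ω hω
  show (ω ∈ ⋂ i ∈ S, g i ⁻¹' sets i) = (ω ∈ ⋂ i ∈ S, f i ⁻¹' sets i)
  simp only [Set.mem_iInter, Set.mem_preimage, eq_iff_iff]
  exact ⟨fun hm i hi => (hω i hi) ▸ hm i hi, fun hm i hi => (hω i hi) ▸ hm i hi⟩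

/-- Deterministic iteration map of the scheme as a function of finitely many innovations. -/
def iterFun {d q : ℕ} (H : Euc d → Euc q → Euc d) (γ : ℕ → ℝ) (k : ℕ) (θ : Euc d) :
    (j : ℕ) → (Fin j → Euc q) → Euc d
  | 0, _ => θ
  | j + 1, v =>
      iterFun H γ k θ j (v ∘ Fin.castSucc) -
        γ (k + j + 1) • H (iterFun H γ k θ j (v ∘ Fin.castSucc)) (v (Fin.last j))

lemma iterFun_measurable {d q : ℕ} {H : Euc d → Euc q → Euc d} {γ : ℕ → ℝ} {k : ℕ} {θ : Euc d}
    (hH : Measurable fun p : Euc d × Euc q => H p.1 p.2) (j : ℕ) :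
    Measurable (iterFun H γ k θ j) := by
  induction j with
  | zero => exact measurable_const
  | succ j ih =>
    have hcast : Measurable fun v : Fin (j + 1) → Euc q => v ∘ Fin.castSucc :=
      measurable_pi_lambda _ fun i => measurable_pi_apply _
    have h1 : Measurable fun v : Fin (j + 1) → Euc q => iterFun H γ k θ j (v ∘ Fin.castSucc) :=
      ih.comp hcast
    exact h1.sub ((hH.comp (h1.prodMk (measurable_pi_apply (Fin.last j)))).const_smul (γ (k + j + 1)))

set_option maxHeartbeats 1000000 in
/-- **Proposition 4.2bis** (Fathi–Frikha): Lipschitz control of the iterated transition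
kernels `P_{k,p}(f)(θ) = E[f(θ_p) | θ_k = θ]` of the stochastic approximation scheme
under (HL) and (HUA). -/
theorem rm_kernel_lipschitz
    {Ω : Type} [MeasurableSpace Ω] (P : Measure Ω) [IsProbabilityMeasure P]
    {d q : ℕ} (H : Euc d → Euc q → Euc d)
    (hHmeas : Measurable fun p : Euc d × Euc q => H p.1 p.2)
    (μ : Measure (Euc q)) [IsProbabilityMeasure μ]
    (U : ℕ → Ω → Euc q) (hU : IsIID P U μ)
    (γ : ℕ → ℝ) (hγpos : ∀ n, 0 < γ n) (hγdiv : ¬ Summable γ)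
    (hγsq : Summable fun n => γ n ^ 2)
    (hU2 : Integrable (fun u : Euc q => ‖u‖ ^ 2) μ)
    (CH : ℝ) (hCH : 0 < CH)
    (hHL : ∀ u : Euc q, ∀ θ θ' : Euc d, ‖H θ u - H θ' u‖ ≤ CH * (1 + ‖u‖) * ‖θ - θ'‖)
    (lmin : ℝ) (hlmin : 0 < lmin)
    (hdiff : ContDiff ℝ 1 fun θ : Euc d => ∫ u, H θ u ∂μ)
    (hHUA : ∀ θ ξ : Euc d,
      lmin * ‖ξ‖ ^ 2 ≤ (inner ℝ (fderiv ℝ (fun θ' : Euc d => ∫ u, H θ' u ∂μ) θ ξ) ξ : ℝ))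
    (N : ℕ) (hN : 0 < N) :
    let CHμ : ℝ := 2 * CH ^ 2 * (1 + ∫ u, ‖u‖ ^ 2 ∂μ)
    ∀ (f : Euc d → ℝ) (Kf : ℝ≥0), LipschitzWith Kf f →
      ∀ k p : ℕ, k ≤ p → p ≤ N - 1 → ∀ θ θ' : Euc d,
        |(∫ ω, f (rmFrom H γ U k θ (p - k) ω) ∂P) -
            ∫ ω, f (rmFrom H γ U k θ' (p - k) ω) ∂P|
          ≤ (Kf : ℝ) *
            (∏ i ∈ Finset.Ico k p, Real.sqrt (1 - 2 * lmin * γ (i + 1) + CHμ * γ (i + 1) ^ 2)) *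
            ‖θ - θ'‖ := by
  classical
  intro CHμ f Kf hf k p hkp hpN θ θ'
  have hCHμ : CHμ = 2 * CH ^ 2 * (1 + ∫ u, ‖u‖ ^ 2 ∂μ) := rfl
  by_cases hθeq : θ = θ'
  · subst hθeq
    rw [sub_self, abs_zero, sub_self, norm_zero, mul_zero]
  have : Nontrivial (Euc d) := nontrivial_of_ne θ θ' hθeq
  set n := p - k with hn
  set m2 := ∫ u, ‖u‖ ^ 2 ∂μ with hm2
  have hm2nonneg : 0 ≤ m2 := integral_nonneg fun u => sq_nonneg _
  have hsecmeas : ∀ ϑ : Euc d, Measurable fun u => H ϑ u := fun ϑ =>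
    hHmeas.comp measurable_prodMk_left
  have intU1 : Integrable (fun u : Euc q => ‖u‖) μ := by
    have i12 : Integrable (fun u : Euc q => 1 + ‖u‖ ^ 2) μ := (integrable_const _).add hU2
    refine i12.mono' measurable_norm.aestronglyMeasurable ?_
    filter_upwards with u
    rw [Real.norm_eq_abs, abs_of_nonneg (norm_nonneg _)]
    nlinarith [norm_nonneg u, sq_nonneg (‖u‖ - 1)]
  set m1 := ∫ u, ‖u‖ ∂μ with hm1
  have hm1nonneg : 0 ≤ m1 := integral_nonneg fun u => norm_nonneg _
  have hm1sq : m1 ^ 2 ≤ m2 := sq_integral_le μ intU1 hU2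
  have intDiff : ∀ a b : Euc d, Integrable (fun u => H a u - H b u) μ := by
    intro a b
    refine ((intU1.const_mul (CH * ‖a - b‖)).add
      (integrable_const (CH * ‖a - b‖))).mono'
      (((hsecmeas a).sub (hsecmeas b)).aestronglyMeasurable) ?_
    filter_upwards with u
    calc ‖H a u - H b u‖ ≤ CH * (1 + ‖u‖) * ‖a - b‖ := hHL u a b
    _ = CH * ‖a - b‖ * ‖u‖ + CH * ‖a - b‖ := by ring
  set hfun : Euc d → Euc d := fun ϑ => ∫ u, H ϑ u ∂μ with hhfun
  have Hint : ∀ ϑ : Euc d, Integrable (fun u => H ϑ u) μ := by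
    by_contra hc
    push_neg at hc
    obtain ⟨θ₀, hθ₀⟩ := hc
    have hall : ∀ ϑ : Euc d, ¬ Integrable (fun u => H ϑ u) μ := by
      intro ϑ hϑ
      apply hθ₀
      have h2 : Integrable (fun u => H ϑ u - (H ϑ u - H θ₀ u)) μ := hϑ.sub (intDiff ϑ θ₀)
      simpa using h2
    have hzero : hfun = fun _ => 0 := funext fun ϑ => integral_undef (hall ϑ)
    obtain ⟨ξ, hξ⟩ := exists_ne (0 : Euc d)
    have h1 : lmin * ‖ξ‖ ^ 2 ≤ (inner ℝ (fderiv ℝ hfun θ ξ) ξ : ℝ) := hHUA θ ξ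
    rw [hzero] at h1
    simp only [fderiv_fun_const, Pi.zero_apply, ContinuousLinearMap.zero_apply,
      inner_zero_left] at h1
    have h2 : 0 < ‖ξ‖ := norm_pos_iff.mpr hξ
    nlinarith [mul_pos hlmin (pow_pos h2 2)]
  have hsub : ∀ a b : Euc d, hfun a - hfun b = ∫ u, (H a u - H b u) ∂μ := fun a b =>
    (integral_sub (Hint a) (Hint b)).symm
  have hdf : Differentiable ℝ hfun := hdiff.differentiable one_ne_zero
  have hmono : ∀ a b : Euc d, lmin * ‖a - b‖ ^ 2 ≤ (inner ℝ (hfun a - hfun b) (a - b) : ℝ) := by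
    intro a b
    set v := a - b with hv
    have key : ∀ t : ℝ, HasDerivAt
        (fun t : ℝ => (inner ℝ (hfun (b + t • v)) v : ℝ) - t * (lmin * ‖v‖ ^ 2))
        ((inner ℝ (fderiv ℝ hfun (b + t • v) v) v : ℝ) - lmin * ‖v‖ ^ 2) t := by
      intro t
      have hline : HasDerivAt (fun t : ℝ => b + t • v) v t := by
        simpa using ((hasDerivAt_id t).smul_const v).const_add b
      have h1 : HasDerivAt (fun t : ℝ => hfun (b + t • v))
          (fderiv ℝ hfun (b + t • v) v) t := by
        exact ((hdf (b + t • v)).hasFDerivAt.comp_hasDerivAt t hline)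
      have h2 := h1.inner ℝ (hasDerivAt_const t v)
      simp only [inner_zero_right, add_zero, zero_add] at h2
      exact h2.sub (hasDerivAt_mul_const (lmin * ‖v‖ ^ 2))
    have hmonot : Monotone
        (fun t : ℝ => (inner ℝ (hfun (b + t • v)) v : ℝ) - t * (lmin * ‖v‖ ^ 2)) :=
      monotone_of_hasDerivAt_nonneg key fun t => sub_nonneg.2 (hHUA _ v)
    have h01 := hmonot zero_le_one
    simp only [zero_smul, add_zero, one_smul, zero_mul, sub_zero, one_mul] at h01
    have hbv : b + v = a := by rw [hv]; abel
    rw [hbv] at h01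
    rw [inner_sub_left]
    linarith
  have hLipfun : LipschitzWith (Real.toNNReal (CH * (1 + m1))) hfun := by
    refine LipschitzWith.of_dist_le_mul fun a b => ?_
    rw [dist_eq_norm, dist_eq_norm, Real.coe_toNNReal _ (by positivity)]
    rw [hsub a b]
    calc ‖∫ u, (H a u - H b u) ∂μ‖ ≤ ∫ u, ‖H a u - H b u‖ ∂μ :=
        norm_integral_le_integral_norm _
    _ ≤ ∫ u, (CH * ‖a - b‖ * ‖u‖ + CH * ‖a - b‖) ∂μ := by
        refine integral_mono (intDiff a b).norm
          ((intU1.const_mul (CH * ‖a - b‖)).add (integrable_const _)) fun u => ?_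
        calc ‖H a u - H b u‖ ≤ CH * (1 + ‖u‖) * ‖a - b‖ := hHL u a b
        _ = CH * ‖a - b‖ * ‖u‖ + CH * ‖a - b‖ := by ring
    _ = CH * (1 + m1) * ‖a - b‖ := by
        rw [integral_add (intU1.const_mul _) (integrable_const _), integral_const_mul,
          integral_const, probReal_univ]
        simp only [ENNReal.toReal_one, smul_eq_mul, one_mul, ← hm1]
        ring
  have lmin_le : lmin ≤ CH * (1 + m1) := by
    obtain ⟨ξ, hξ⟩ := exists_ne (0 : Euc d)
    have hd : HasFDerivAt hfun (fderiv ℝ hfun θ) θ := (hdf θ).hasFDerivAt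
    have hb := hd.le_of_lipschitz hLipfun
    rw [Real.coe_toNNReal _ (by positivity)] at hb
    have h1 : lmin * ‖ξ‖ ^ 2 ≤ (inner ℝ (fderiv ℝ hfun θ ξ) ξ : ℝ) := hHUA θ ξ
    have h2 : (inner ℝ (fderiv ℝ hfun θ ξ) ξ : ℝ) ≤ ‖fderiv ℝ hfun θ ξ‖ * ‖ξ‖ :=
      real_inner_le_norm _ _
    have h3 : ‖fderiv ℝ hfun θ ξ‖ ≤ CH * (1 + m1) * ‖ξ‖ := by
      calc ‖fderiv ℝ hfun θ ξ‖ ≤ ‖fderiv ℝ hfun θ‖ * ‖ξ‖ :=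
          (fderiv ℝ hfun θ).le_opNorm ξ
      _ ≤ CH * (1 + m1) * ‖ξ‖ := mul_le_mul_of_nonneg_right hb (norm_nonneg _)
    have hξpos : 0 < ‖ξ‖ := norm_pos_iff.mpr hξ
    nlinarith [mul_pos hξpos hξpos]
  have key2 : (1 + m1) ^ 2 ≤ 2 + 2 * m2 := by nlinarith [sq_nonneg (1 - m1)]
  have lminsq : lmin ^ 2 ≤ CHμ := by
    have e1 : lmin ^ 2 ≤ (CH * (1 + m1)) ^ 2 := by nlinarith
    have e2 : (CH * (1 + m1)) ^ 2 ≤ CHμ := by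
      rw [hCHμ]
      nlinarith [mul_le_mul_of_nonneg_left key2 (sq_nonneg CH)]
    linarith
  set factor : ℕ → ℝ := fun i => 1 - 2 * lmin * γ (i + 1) + CHμ * γ (i + 1) ^ 2 with hfactor
  have hfacnn : ∀ i, 0 ≤ factor i := by
    intro i
    simp only [hfactor]
    nlinarith [sq_nonneg (1 - lmin * γ (i + 1)),
      mul_le_mul_of_nonneg_right lminsq (sq_nonneg (γ (i + 1)))]
  have int1u2 : Integrable (fun u : Euc q => (1 + ‖u‖) ^ 2) μ := by
    have e : (fun u : Euc q => (1 + ‖u‖) ^ 2) = fun u => 1 + (2 * ‖u‖ + ‖u‖ ^ 2) := by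
      funext u; ring
    have ia : Integrable (fun u : Euc q => 2 * ‖u‖ + ‖u‖ ^ 2) μ := (intU1.const_mul _).add hU2
    rw [e]
    exact (integrable_const _).add ia
  have hint1u2 : ∫ u, (1 + ‖u‖) ^ 2 ∂μ ≤ 2 * (1 + m2) := by
    have e : ∫ u, (1 + ‖u‖) ^ 2 ∂μ = 1 + (2 * m1 + m2) := by
      rw [show (fun u : Euc q => (1 + ‖u‖) ^ 2) = fun u => 1 + (2 * ‖u‖ + ‖u‖ ^ 2) from
        funext fun u => by ring]
      have ia : Integrable (fun u : Euc q => 2 * ‖u‖ + ‖u‖ ^ 2) μ := (intU1.const_mul _).add hU2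
      rw [integral_add (integrable_const _) ia,
        integral_add (intU1.const_mul _) hU2, integral_const_mul, integral_const, probReal_univ]
      simp only [ENNReal.toReal_one, smul_eq_mul, one_mul, ← hm1, ← hm2]
    rw [e]
    nlinarith [hm1sq, sq_nonneg (1 - m1)]
  have step : ∀ s : ℝ, 0 ≤ s → ∀ a b : Euc d,
      ∫ u, ‖(a - s • H a u) - (b - s • H b u)‖ ^ 2 ∂μ
        ≤ (1 - 2 * lmin * s + CHμ * s ^ 2) * ‖a - b‖ ^ 2 := by
    intro s hs a b
    have hrw : ∀ u : Euc q, ‖(a - s • H a u) - (b - s • H b u)‖ ^ 2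
        = ‖a - b‖ ^ 2 - 2 * s * (inner ℝ (a - b) (H a u - H b u) : ℝ)
          + s ^ 2 * ‖H a u - H b u‖ ^ 2 := by
      intro u
      have e : (a - s • H a u) - (b - s • H b u) = (a - b) - s • (H a u - H b u) := by
        rw [smul_sub]; abel
      rw [e, norm_sub_sq_real, real_inner_smul_right, norm_smul, Real.norm_eq_abs, mul_pow,
        sq_abs]
      ring
    simp only [hrw]
    have intE := intDiff a b
    have intInner : Integrable (fun u => (inner ℝ (a - b) (H a u - H b u) : ℝ)) μ :=
      intE.const_inner _
    have intE2 : Integrable (fun u => ‖H a u - H b u‖ ^ 2) μ := by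
      refine (int1u2.const_mul ((CH * ‖a - b‖) ^ 2)).mono'
        ((((hsecmeas a).sub (hsecmeas b)).norm.pow_const 2).aestronglyMeasurable) ?_
      filter_upwards with u
      rw [Real.norm_eq_abs, abs_of_nonneg (by positivity)]
      have h := pow_le_pow_left₀ (norm_nonneg _) (hHL u a b) 2
      calc ‖H a u - H b u‖ ^ 2 ≤ (CH * (1 + ‖u‖) * ‖a - b‖) ^ 2 := h
      _ = (CH * ‖a - b‖) ^ 2 * (1 + ‖u‖) ^ 2 := by ring
    have hE2le : ∀ u : Euc q, ‖H a u - H b u‖ ^ 2 ≤ (CH * ‖a - b‖) ^ 2 * (1 + ‖u‖) ^ 2 := by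
      intro u
      have h := pow_le_pow_left₀ (norm_nonneg _) (hHL u a b) 2
      calc ‖H a u - H b u‖ ^ 2 ≤ (CH * (1 + ‖u‖) * ‖a - b‖) ^ 2 := h
      _ = (CH * ‖a - b‖) ^ 2 * (1 + ‖u‖) ^ 2 := by ring
    have iA : Integrable
        (fun u : Euc q => ‖a - b‖ ^ 2 - 2 * s * (inner ℝ (a - b) (H a u - H b u) : ℝ)) μ :=
      (integrable_const _).sub (intInner.const_mul _)
    rw [integral_add iA (intE2.const_mul _),
      integral_sub (integrable_const _) (intInner.const_mul _), integral_const, probReal_univ,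
      integral_const_mul, integral_const_mul]
    simp only [ENNReal.toReal_one, smul_eq_mul, one_mul]
    have hI1 : lmin * ‖a - b‖ ^ 2 ≤ ∫ u, (inner ℝ (a - b) (H a u - H b u) : ℝ) ∂μ := by
      rw [integral_inner intE (a - b), ← hsub a b, real_inner_comm]
      exact hmono a b
    have hI2 : ∫ u, ‖H a u - H b u‖ ^ 2 ∂μ ≤ CHμ * ‖a - b‖ ^ 2 := by
      calc ∫ u, ‖H a u - H b u‖ ^ 2 ∂μ
          ≤ ∫ u, (CH * ‖a - b‖) ^ 2 * (1 + ‖u‖) ^ 2 ∂μ :=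
          integral_mono intE2 (int1u2.const_mul _) hE2le
      _ = (CH * ‖a - b‖) ^ 2 * ∫ u, (1 + ‖u‖) ^ 2 ∂μ := integral_const_mul _ _
      _ ≤ (CH * ‖a - b‖) ^ 2 * (2 * (1 + m2)) := by
          exact mul_le_mul_of_nonneg_left hint1u2 (by positivity)
      _ = CHμ * ‖a - b‖ ^ 2 := by rw [hCHμ]; ring
    nlinarith [mul_le_mul_of_nonneg_left hI1 (by positivity : (0:ℝ) ≤ 2 * s),
      mul_le_mul_of_nonneg_left hI2 (sq_nonneg s)]
  -- measurable modifications of the innovations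
  have hUaem : ∀ i, AEMeasurable (U i) P := by
    intro i
    by_contra hc
    have hmap := hU.2 i
    rw [Measure.map_of_not_aemeasurable hc] at hmap
    exact IsProbabilityMeasure.ne_zero μ hmap.symm
  set U' : ℕ → Ω → Euc q := fun i => (hUaem i).mk (U i) with hU'def
  have hU'm : ∀ i, Measurable (U' i) := fun i => (hUaem i).measurable_mk
  have hU'ae : ∀ i, U i =ᵐ[P] U' i := fun i => (hUaem i).ae_eq_mk
  have hU'map : ∀ i, Measure.map (U' i) P = μ := fun i => by
    rw [← Measure.map_congr (hU'ae i), hU.2 i]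
  have hU'indep : iIndepFun U' P := iIndepFun_ae_eq hU.1 hU'ae
  -- the tuple of innovations and the coupled chain
  set T : (j : ℕ) → Ω → (Fin j → Euc q) := fun j ω i => U' (k + i + 1) ω with hT
  have hTm : ∀ j, Measurable (T j) := fun j => measurable_pi_lambda _ fun i => hU'm _
  set W : ℕ → Ω → Euc d × Euc d :=
    fun j ω => (iterFun H γ k θ j (T j ω), iterFun H γ k θ' j (T j ω)) with hW
  have hWm : ∀ j, Measurable (W j) := fun j =>
    ((iterFun_measurable hHmeas j).comp (hTm j)).prodMk
      ((iterFun_measurable hHmeas j).comp (hTm j))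
  have hWaem : ∀ j, AEMeasurable (W j) P := fun j => (hWm j).aemeasurable
  have hTcast : ∀ (j : ℕ) (ω : Ω), T (j + 1) ω ∘ Fin.castSucc = T j ω := by
    intro j ω; funext i; simp [hT]
  have hTlast : ∀ (j : ℕ) (ω : Ω), T (j + 1) ω (Fin.last j) = U' (k + j + 1) ω := by
    intro j ω; simp [hT]
  have hrm : ∀ (ϑ : Euc d) (j : ℕ) (ω : Ω),
      rmFrom H γ U' k ϑ j ω = iterFun H γ k ϑ j (T j ω) := by
    intro ϑ j
    induction j with
    | zero => intro ω; rfl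
    | succ j ih =>
      intro ω
      show rmFrom H γ U' k ϑ j ω - γ (k + j + 1) • H (rmFrom H γ U' k ϑ j ω) (U' (k + j + 1) ω)
        = iterFun H γ k ϑ j (T (j + 1) ω ∘ Fin.castSucc) -
          γ (k + j + 1) • H (iterFun H γ k ϑ j (T (j + 1) ω ∘ Fin.castSucc))
            (T (j + 1) ω (Fin.last j))
      rw [hTcast j ω, hTlast j ω, ih ω]
  have hrm_ae : ∀ (ϑ : Euc d) (j : ℕ), rmFrom H γ U k ϑ j =ᵐ[P] rmFrom H γ U' k ϑ j := by
    intro ϑ j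
    induction j with
    | zero => exact Filter.EventuallyEq.rfl
    | succ j ih =>
      filter_upwards [ih, hU'ae (k + j + 1)] with ω h1 h2
      show rmFrom H γ U k ϑ j ω - γ (k + j + 1) • H (rmFrom H γ U k ϑ j ω) (U (k + j + 1) ω)
        = rmFrom H γ U' k ϑ j ω - γ (k + j + 1) • H (rmFrom H γ U' k ϑ j ω) (U' (k + j + 1) ω)
      rw [h1, h2]
  -- independence of the chain from the next innovation
  have hindep : ∀ j : ℕ, IndepFun (W j) (U' (k + j + 1)) P := by
    intro j
    have hdisj : Disjoint (Finset.Ico (k + 1) (k + j + 1)) ({k + j + 1} : Finset ℕ) := by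
      simp [Finset.disjoint_singleton_right, Finset.mem_Ico]
    have base := hU'indep.indepFun_finset (Finset.Ico (k + 1) (k + j + 1)) {k + j + 1}
      hdisj hU'm
    have hmemS : ∀ i : Fin j, k + ↑i + 1 ∈ Finset.Ico (k + 1) (k + j + 1) := fun i => by
      simp only [Finset.mem_Ico]
      omega
    have hφm : Measurable fun (w : (i : (Finset.Ico (k + 1) (k + j + 1) : Finset ℕ)) → Euc q)
        (i : Fin j) => w ⟨k + ↑i + 1, hmemS i⟩ :=
      measurable_pi_lambda _ fun i => measurable_pi_apply _
    have hψm : Measurable fun (w : (i : ({k + j + 1} : Finset ℕ)) → Euc q) =>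
        w ⟨k + j + 1, Finset.mem_singleton_self _⟩ := measurable_pi_apply _
    have hTind : IndepFun (T j) (U' (k + j + 1)) P := base.comp hφm hψm
    have hpairm : Measurable fun v : Fin j → Euc q =>
        (iterFun H γ k θ j v, iterFun H γ k θ' j v) :=
      (iterFun_measurable hHmeas j).prodMk (iterFun_measurable hHmeas j)
    exact hTind.comp hpairm measurable_id
  set ν : ℕ → Measure (Euc d × Euc d) := fun j => Measure.map (W j) P with hν
  have hνprob : ∀ j, IsProbabilityMeasure (ν j) := fun j => Measure.isProbabilityMeasure_map (hWaem j)
  have hmap_pair : ∀ j, Measure.map (fun ω => (W j ω, U' (k + j + 1) ω)) P = (ν j).prod μ := by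
    intro j
    rw [(indepFun_iff_map_prod_eq_prod_map_map (hWaem j) ((hU'm _).aemeasurable)).1
      (hindep j), hU'map]
  set D : ℕ → Ω → ℝ := fun j ω => ‖(W j ω).1 - (W j ω).2‖ ^ 2 with hD
  have hzmeas : Measurable fun z : Euc d × Euc d => ‖z.1 - z.2‖ ^ 2 :=
    (measurable_fst.sub measurable_snd).norm.pow_const 2
  have hDint_ν : ∀ j, Integrable (D j) P ↔
      Integrable (fun z : Euc d × Euc d => ‖z.1 - z.2‖ ^ 2) (ν j) := by
    intro j
    rw [hν]
    exact (integrable_map_measure hzmeas.aestronglyMeasurable (hWaem j)).symm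
  have hDint_eq : ∀ j, ∫ z, ‖z.1 - z.2‖ ^ 2 ∂(ν j) = ∫ ω, D j ω ∂P := by
    intro j
    rw [hν]
    exact integral_map (hWaem j) hzmeas.aestronglyMeasurable
  -- the main induction
  have main : ∀ j : ℕ, Integrable (D j) P ∧
      ∫ ω, D j ω ∂P ≤ (∏ i ∈ Finset.range j, factor (k + i)) * ‖θ - θ'‖ ^ 2 := by
    intro j
    induction j with
    | zero =>
      have hD0 : D 0 = fun _ => ‖θ - θ'‖ ^ 2 := rfl
      constructor
      · rw [hD0]; exact integrable_const _
      · rw [hD0]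
        simp [measure_univ]
    | succ j ih =>
      obtain ⟨ihInt, ihLe⟩ := ih
      set s := γ (k + j + 1) with hs
      have hs0 : 0 ≤ s := (hγpos _).le
      set g : (Euc d × Euc d) × Euc q → ℝ := fun zu =>
        ‖(zu.1.1 - s • H zu.1.1 zu.2) - (zu.1.2 - s • H zu.1.2 zu.2)‖ ^ 2 with hg
      have hgm : Measurable g := by
        have h1 : Measurable fun zu : (Euc d × Euc d) × Euc q => H zu.1.1 zu.2 :=
          hHmeas.comp (measurable_fst.fst.prodMk measurable_snd)
        have h2 : Measurable fun zu : (Euc d × Euc d) × Euc q => H zu.1.2 zu.2 :=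
          hHmeas.comp (measurable_fst.snd.prodMk measurable_snd)
        exact (((measurable_fst.fst.sub (h1.const_smul s)).sub
          (measurable_fst.snd.sub (h2.const_smul s))).norm.pow_const 2)
      have hgnn : ∀ zu, 0 ≤ g zu := fun zu => by simp only [hg]; positivity
      have hDsucc : D (j + 1) = fun ω => g (W j ω, U' (k + j + 1) ω) := by
        funext ω
        show ‖(W (j + 1) ω).1 - (W (j + 1) ω).2‖ ^ 2 = _
        have e1 : (W (j + 1) ω).1
            = (W j ω).1 - s • H (W j ω).1 (U' (k + j + 1) ω) := by
          show iterFun H γ k θ (j + 1) (T (j + 1) ω) = _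
          show iterFun H γ k θ j (T (j + 1) ω ∘ Fin.castSucc) -
              γ (k + j + 1) • H (iterFun H γ k θ j (T (j + 1) ω ∘ Fin.castSucc))
                (T (j + 1) ω (Fin.last j)) = _
          rw [hTcast j ω, hTlast j ω]
        have e2 : (W (j + 1) ω).2
            = (W j ω).2 - s • H (W j ω).2 (U' (k + j + 1) ω) := by
          show iterFun H γ k θ' (j + 1) (T (j + 1) ω) = _
          show iterFun H γ k θ' j (T (j + 1) ω ∘ Fin.castSucc) -
              γ (k + j + 1) • H (iterFun H γ k θ' j (T (j + 1) ω ∘ Fin.castSucc))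
                (T (j + 1) ω (Fin.last j)) = _
          rw [hTcast j ω, hTlast j ω]
        rw [e1, e2]
      set c := |s| * CH with hc
      have hcnn : 0 ≤ c := by positivity
      set B : Euc q → ℝ := fun u => (1 + c * (1 + ‖u‖)) ^ 2 with hB
      have hBnn : ∀ u, 0 ≤ B u := fun u => by simp only [hB]; positivity
      have intB : Integrable B μ := by
        have e : B = fun u => (1 + c) ^ 2 + ((2 * (1 + c) * c) * ‖u‖ + c ^ 2 * ‖u‖ ^ 2) := by
          funext u; simp only [hB]; ring
        have ia : Integrable (fun u : Euc q => (2 * (1 + c) * c) * ‖u‖ + c ^ 2 * ‖u‖ ^ 2) μ :=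
          (intU1.const_mul _).add (hU2.const_mul _)
        rw [e]
        exact (integrable_const _).add ia
      have hgB : ∀ (z : Euc d × Euc d) (u : Euc q), g (z, u) ≤ ‖z.1 - z.2‖ ^ 2 * B u := by
        intro z u
        have e : (z.1 - s • H z.1 u) - (z.2 - s • H z.2 u)
            = (z.1 - z.2) - s • (H z.1 u - H z.2 u) := by
          rw [smul_sub]; abel
        have h1 : ‖(z.1 - z.2) - s • (H z.1 u - H z.2 u)‖
            ≤ ‖z.1 - z.2‖ * (1 + c * (1 + ‖u‖)) := by
          calc ‖(z.1 - z.2) - s • (H z.1 u - H z.2 u)‖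
              ≤ ‖z.1 - z.2‖ + ‖s • (H z.1 u - H z.2 u)‖ := norm_sub_le _ _
          _ = ‖z.1 - z.2‖ + |s| * ‖H z.1 u - H z.2 u‖ := by
              rw [norm_smul]; rfl
          _ ≤ ‖z.1 - z.2‖ + |s| * (CH * (1 + ‖u‖) * ‖z.1 - z.2‖) := by
              have := hHL u z.1 z.2
              have h2 : |s| * ‖H z.1 u - H z.2 u‖ ≤ |s| * (CH * (1 + ‖u‖) * ‖z.1 - z.2‖) :=
                mul_le_mul_of_nonneg_left this (abs_nonneg s)
              linarith
          _ = ‖z.1 - z.2‖ * (1 + c * (1 + ‖u‖)) := by rw [hc]; ring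
        calc g (z, u) = ‖(z.1 - z.2) - s • (H z.1 u - H z.2 u)‖ ^ 2 := by
              simp only [hg]; rw [e]
        _ ≤ (‖z.1 - z.2‖ * (1 + c * (1 + ‖u‖))) ^ 2 :=
            pow_le_pow_left₀ (norm_nonneg _) h1 2
        _ = ‖z.1 - z.2‖ ^ 2 * B u := by simp only [hB]; ring
      have hsec : ∀ z : Euc d × Euc d, Integrable (fun u => g (z, u)) μ := by
        intro z
        refine (intB.const_mul (‖z.1 - z.2‖ ^ 2)).mono'
          ((hgm.comp measurable_prodMk_left).aestronglyMeasurable) ?_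
        filter_upwards with u
        rw [Real.norm_eq_abs, abs_of_nonneg (hgnn _)]
        exact hgB z u
      set CB := ∫ u, B u ∂μ with hCB
      have hCBnn : 0 ≤ CB := integral_nonneg hBnn
      have hIntInner : ∀ z : Euc d × Euc d, ∫ u, ‖g (z, u)‖ ∂μ ≤ ‖z.1 - z.2‖ ^ 2 * CB := by
        intro z
        have e : ∫ u, ‖g (z, u)‖ ∂μ = ∫ u, g (z, u) ∂μ :=
          integral_congr_ae (Eventually.of_forall fun u => Real.norm_of_nonneg (hgnn (z, u)))
        rw [e, hCB, ← integral_const_mul]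
        exact integral_mono (hsec z) (intB.const_mul _) fun u => hgB z u
      have hDν : Integrable (fun z : Euc d × Euc d => ‖z.1 - z.2‖ ^ 2) (ν j) :=
        (hDint_ν j).1 ihInt
      have gint : Integrable g ((ν j).prod μ) := by
        rw [integrable_prod_iff hgm.aestronglyMeasurable]
        constructor
        · exact Eventually.of_forall fun z => hsec z
        · refine (hDν.mul_const CB).mono'
            ((hgm.norm.stronglyMeasurable.integral_prod_right').aestronglyMeasurable) ?_
          filter_upwards with z
          rw [Real.norm_eq_abs, abs_of_nonneg (integral_nonneg fun u => norm_nonneg _)]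
          exact hIntInner z
      have pairaem : AEMeasurable (fun ω => (W j ω, U' (k + j + 1) ω)) P :=
        ((hWm j).prodMk (hU'm _)).aemeasurable
      have intDsucc : Integrable (D (j + 1)) P := by
        rw [hDsucc]
        have h := (integrable_map_measure hgm.aestronglyMeasurable pairaem).1
          (by rw [hmap_pair j]; exact gint)
        exact h
      refine ⟨intDsucc, ?_⟩
      have e1 : ∫ ω, D (j + 1) ω ∂P = ∫ z, g z ∂((ν j).prod μ) := by
        rw [hDsucc, ← hmap_pair j, integral_map pairaem hgm.aestronglyMeasurable]
      have hstepz : ∀ z : Euc d × Euc d, ∫ u, g (z, u) ∂μ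
          ≤ factor (k + j) * ‖z.1 - z.2‖ ^ 2 := by
        intro z
        have h := step s hs0 z.1 z.2
        simpa only [hfactor, hg, hs] using h
      calc ∫ ω, D (j + 1) ω ∂P = ∫ z, ∫ u, g (z, u) ∂μ ∂(ν j) := by
            rw [e1, integral_prod g gint]
      _ ≤ ∫ z, factor (k + j) * ‖z.1 - z.2‖ ^ 2 ∂(ν j) :=
          integral_mono gint.integral_prod_left (hDν.const_mul _) hstepz
      _ = factor (k + j) * ∫ z, ‖z.1 - z.2‖ ^ 2 ∂(ν j) := integral_const_mul _ _
      _ = factor (k + j) * ∫ ω, D j ω ∂P := by rw [hDint_eq j]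
      _ ≤ factor (k + j) * ((∏ i ∈ Finset.range j, factor (k + i)) * ‖θ - θ'‖ ^ 2) :=
          mul_le_mul_of_nonneg_left ihLe (hfacnn _)
      _ = (∏ i ∈ Finset.range (j + 1), factor (k + i)) * ‖θ - θ'‖ ^ 2 := by
          rw [Finset.prod_range_succ]; ring
  obtain ⟨intDn, hDn⟩ := main n
  -- rewrite the goal in terms of W n
  have hgoal1 : ∫ ω, f (rmFrom H γ U k θ n ω) ∂P = ∫ ω, f ((W n ω).1) ∂P := by
    refine integral_congr_ae ?_
    filter_upwards [hrm_ae θ n] with ω h1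
    rw [h1, hrm θ n ω]
  have hgoal2 : ∫ ω, f (rmFrom H γ U k θ' n ω) ∂P = ∫ ω, f ((W n ω).2) ∂P := by
    refine integral_congr_ae ?_
    filter_upwards [hrm_ae θ' n] with ω h1
    rw [h1, hrm θ' n ω]
  rw [hgoal1, hgoal2]
  have hprod : (∏ i ∈ Finset.Ico k p,
        Real.sqrt (1 - 2 * lmin * γ (i + 1) + CHμ * γ (i + 1) ^ 2))
      = ∏ i ∈ Finset.range n, Real.sqrt (factor (k + i)) := by
    rw [Finset.prod_Ico_eq_prod_range]
  have hRHSnn : 0 ≤ ∏ i ∈ Finset.range n, Real.sqrt (factor (k + i)) :=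
    Finset.prod_nonneg fun i _ => Real.sqrt_nonneg _
  -- integrability of the norm of the difference and of the f-difference
  have hXYm : Measurable fun ω => ‖(W n ω).1 - (W n ω).2‖ :=
    ((measurable_fst.comp (hWm n)).sub (measurable_snd.comp (hWm n))).norm
  have intnorm : Integrable (fun ω => ‖(W n ω).1 - (W n ω).2‖) P := by
    have i1 : Integrable (fun ω => 1 + D n ω) P := (integrable_const _).add intDn
    refine i1.mono' hXYm.aestronglyMeasurable ?_
    filter_upwards with ω
    rw [Real.norm_eq_abs, abs_of_nonneg (norm_nonneg _)]
    simp only [hD]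
    nlinarith [norm_nonneg ((W n ω).1 - (W n ω).2), sq_nonneg (‖(W n ω).1 - (W n ω).2‖ - 1)]
  have hfd : ∀ ω, |f ((W n ω).1) - f ((W n ω).2)| ≤ (Kf : ℝ) * ‖(W n ω).1 - (W n ω).2‖ := by
    intro ω
    have := hf.dist_le_mul ((W n ω).1) ((W n ω).2)
    rwa [Real.dist_eq, dist_eq_norm] at this
  have hfXm : Measurable fun ω => f ((W n ω).1) :=
    (hf.continuous.measurable).comp (measurable_fst.comp (hWm n))
  have hfYm : Measurable fun ω => f ((W n ω).2) :=
    (hf.continuous.measurable).comp (measurable_snd.comp (hWm n))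
  have intFdiff : Integrable (fun ω => f ((W n ω).1) - f ((W n ω).2)) P := by
    refine (intnorm.const_mul (Kf : ℝ)).mono'
      ((hfXm.sub hfYm).aestronglyMeasurable) ?_
    filter_upwards with ω
    rw [Real.norm_eq_abs]
    exact hfd ω
  by_cases hFY : Integrable (fun ω => f ((W n ω).2)) P
  · -- both integrable
    have hFX : Integrable (fun ω => f ((W n ω).1)) P := by
      have h : Integrable (fun ω => (f ((W n ω).1) - f ((W n ω).2)) + f ((W n ω).2)) P :=
        intFdiff.add hFY
      have e : (fun ω => (f ((W n ω).1) - f ((W n ω).2)) + f ((W n ω).2))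
          = fun ω => f ((W n ω).1) := by funext ω; ring
      rwa [e] at h
    rw [← integral_sub hFX hFY]
    have habs : |∫ ω, (f ((W n ω).1) - f ((W n ω).2)) ∂P|
        ≤ ∫ ω, |f ((W n ω).1) - f ((W n ω).2)| ∂P := by
      have := norm_integral_le_integral_norm (fun ω => f ((W n ω).1) - f ((W n ω).2)) (μ := P)
      simpa [Real.norm_eq_abs] using this
    have h2 : ∫ ω, |f ((W n ω).1) - f ((W n ω).2)| ∂P
        ≤ (Kf : ℝ) * ∫ ω, ‖(W n ω).1 - (W n ω).2‖ ∂P := by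
      rw [← integral_const_mul]
      exact integral_mono intFdiff.abs (intnorm.const_mul _) fun ω => hfd ω
    have h3 : ∫ ω, ‖(W n ω).1 - (W n ω).2‖ ∂P ≤ Real.sqrt (∫ ω, D n ω ∂P) := by
      rw [Real.le_sqrt (integral_nonneg fun ω => norm_nonneg _)
        (integral_nonneg fun ω => sq_nonneg _)]
      exact sq_integral_le P intnorm intDn
    have h4 : Real.sqrt (∫ ω, D n ω ∂P)
        ≤ (∏ i ∈ Finset.range n, Real.sqrt (factor (k + i))) * ‖θ - θ'‖ := by
      calc Real.sqrt (∫ ω, D n ω ∂P)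
          ≤ Real.sqrt ((∏ i ∈ Finset.range n, factor (k + i)) * ‖θ - θ'‖ ^ 2) :=
          Real.sqrt_le_sqrt hDn
      _ = (∏ i ∈ Finset.range n, Real.sqrt (factor (k + i))) * ‖θ - θ'‖ := by
          rw [Real.sqrt_mul (Finset.prod_nonneg fun i _ => hfacnn _),
            Real.sqrt_sq (norm_nonneg _),
            sqrt_prod _ _ fun i _ => hfacnn _]
    calc |∫ ω, (f ((W n ω).1) - f ((W n ω).2)) ∂P|
        ≤ (Kf : ℝ) * ∫ ω, ‖(W n ω).1 - (W n ω).2‖ ∂P := habs.trans h2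
    _ ≤ (Kf : ℝ) * ((∏ i ∈ Finset.range n, Real.sqrt (factor (k + i))) * ‖θ - θ'‖) := by
        refine mul_le_mul_of_nonneg_left (h3.trans h4) Kf.coe_nonneg
    _ = (Kf : ℝ) * (∏ i ∈ Finset.Ico k p,
          Real.sqrt (1 - 2 * lmin * γ (i + 1) + CHμ * γ (i + 1) ^ 2)) * ‖θ - θ'‖ := by
        rw [hprod]; ring
  · -- neither integrable: both integrals are zero
    have hFX : ¬ Integrable (fun ω => f ((W n ω).1)) P := by
      intro hFX
      apply hFY
      have h : Integrable (fun ω => f ((W n ω).1) - (f ((W n ω).1) - f ((W n ω).2))) P :=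
        hFX.sub intFdiff
      have e : (fun ω => f ((W n ω).1) - (f ((W n ω).1) - f ((W n ω).2)))
          = fun ω => f ((W n ω).2) := by funext ω; ring
      rwa [e] at h
    rw [integral_undef hFX, integral_undef hFY, sub_zero, abs_zero]
    have : 0 ≤ (Kf : ℝ) * (∏ i ∈ Finset.Ico k p,
        Real.sqrt (1 - 2 * lmin * γ (i + 1) + CHμ * γ (i + 1) ^ 2)) * ‖θ - θ'‖ := by
      refine mul_nonneg (mul_nonneg Kf.coe_nonneg ?_) (norm_nonneg _)
      exact Finset.prod_nonneg fun i _ => Real.sqrt_nonneg _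
    exact this


end FathiFrikha
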